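/- arXiv:1411.5788 — 4 statements merged into one kernel-verified Lean document; each statement's English description precedes it below -/
import Mathlib

section
/- Let H be a bialgebra over a field k. Then H admits an antipode if and only if the linear map β : H ⊗ H → H ⊗ H defined by β(x ⊗ y) = Δ(x) · (1 ⊗ y) (i.e. β = (id ⊗ μ) ∘ (Δ ⊗ id)) is bijective. -/
open Coalgebra TensorProduct

/-- `S : H →ₗ[k] H` is an antipode for the bialgebra `H`: a two-sided convolution
inverse of the identity map. -/
def IsAntipode (k H : Type*) [CommRing k] [Ring H] [Bialgebra k H] (S : H →ₗ[k] H) : Prop :=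
  LinearMap.mul' k H ∘ₗ S.rTensor H ∘ₗ (Coalgebra.comul : H →ₗ[k] H ⊗[k] H) =
      Algebra.linearMap k H ∘ₗ Coalgebra.counit ∧
    LinearMap.mul' k H ∘ₗ S.lTensor H ∘ₗ (Coalgebra.comul : H →ₗ[k] H ⊗[k] H) =
      Algebra.linearMap k H ∘ₗ Coalgebra.counit

/-- The Hopf (Galois) map `β = (id ⊗ μ) ∘ (Δ ⊗ id) : H ⊗ H → H ⊗ H`,
`x ⊗ y ↦ Δ(x) · (1 ⊗ y)`. -/
noncomputable def hopfMap (k H : Type*) [CommRing k] [Ring H] [Bialgebra k H] :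
    H ⊗[k] H →ₗ[k] H ⊗[k] H :=
  LinearMap.lTensor H (LinearMap.mul' k H) ∘ₗ
    (TensorProduct.assoc k H H H).toLinearMap ∘ₗ
      LinearMap.rTensor H (Coalgebra.comul : H →ₗ[k] H ⊗[k] H)

section Aux

variable {k H : Type*} [CommRing k] [Ring H] [Bialgebra k H]

lemma repr_sum_smul_right (x : H) (r : Repr k x (H × H)) :
    ∑ i ∈ r.index, counit (R := k) (r.left i) • r.right i = x := by
  have := sum_counit_tmul_eq r
  apply_fun (TensorProduct.lid k H) at this
  simp only [map_sum, _root_.TensorProduct.lid_tmul] at this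
  simpa using this

lemma repr_sum_smul_left (x : H) (r : Repr k x (H × H)) :
    ∑ i ∈ r.index, counit (R := k) (r.right i) • r.left i = x := by
  have := sum_tmul_counit_eq r
  apply_fun (TensorProduct.rid k H) at this
  simp only [map_sum, _root_.TensorProduct.rid_tmul] at this
  simpa using this

lemma hopfMap_tmul (x y : H) (r : Repr k x (H × H)) :
    hopfMap k H (x ⊗ₜ[k] y) = ∑ i ∈ r.index, r.left i ⊗ₜ[k] (r.right i * y) := by
  simp [hopfMap, ← r.eq, sum_tmul, map_sum]

/-- `ε ⊗ id : H ⊗ H → H`. -/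
noncomputable def epsId (k H : Type*) [CommRing k] [Ring H] [Bialgebra k H] :
    H ⊗[k] H →ₗ[k] H :=
  (TensorProduct.lid k H).toLinearMap ∘ₗ (Coalgebra.counit : H →ₗ[k] k).rTensor H

lemma epsId_tmul (a b : H) : epsId k H (a ⊗ₜ[k] b) = counit (R := k) a • b := by
  simp [epsId]

lemma epsId_comp_hopfMap : epsId k H ∘ₗ hopfMap k H = LinearMap.mul' k H := by
  apply TensorProduct.ext'
  intro x y
  have r := ℛ k x
  rw [LinearMap.comp_apply, hopfMap_tmul x y r, map_sum, LinearMap.mul'_apply]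
  calc ∑ i ∈ r.index, epsId k H (r.left i ⊗ₜ[k] (r.right i * y))
      = (∑ i ∈ r.index, counit (R := k) (r.left i) • r.right i) * y := by
        rw [Finset.sum_mul]
        exact Finset.sum_congr rfl fun i _ => by rw [epsId_tmul, smul_mul_assoc]
    _ = x * y := by rw [repr_sum_smul_right]

lemma hopfMap_comp_lTensor_mulRight (c : H) :
    hopfMap k H ∘ₗ LinearMap.lTensor H (LinearMap.mulRight k c) =
      LinearMap.lTensor H (LinearMap.mulRight k c) ∘ₗ hopfMap k H := by
  apply TensorProduct.ext'
  intro x y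
  have r := ℛ k x
  rw [LinearMap.comp_apply, LinearMap.comp_apply, LinearMap.lTensor_tmul,
    LinearMap.mulRight_apply, hopfMap_tmul _ _ r, hopfMap_tmul _ _ r, map_sum]
  exact Finset.sum_congr rfl fun i _ => by
    rw [LinearMap.lTensor_tmul, LinearMap.mulRight_apply, mul_assoc]

/-- `ρ = (Δ ⊗ id)` followed by the associator. -/
noncomputable def rho (k H : Type*) [CommRing k] [Ring H] [Bialgebra k H] :
    H ⊗[k] H →ₗ[k] H ⊗[k] (H ⊗[k] H) :=
  (TensorProduct.assoc k H H H).toLinearMap ∘ₗ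
    LinearMap.rTensor H (Coalgebra.comul : H →ₗ[k] H ⊗[k] H)

lemma rho_tmul (x y : H) (r : Repr k x (H × H)) :
    rho k H (x ⊗ₜ[k] y) = ∑ i ∈ r.index, r.left i ⊗ₜ[k] (r.right i ⊗ₜ[k] y) := by
  simp [rho, ← r.eq, sum_tmul, map_sum]

lemma rho_comp_hopfMap :
    rho k H ∘ₗ hopfMap k H = LinearMap.lTensor H (hopfMap k H) ∘ₗ rho k H := by
  apply TensorProduct.ext'
  intro x y
  set r := ℛ k x with hr
  set a₁ : (i : r.ι) → Repr k (r.left i) (H × H) := fun i => ℛ k (r.left i)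
  set a₂ : (i : r.ι) → Repr k (r.right i) (H × H) := fun i => ℛ k (r.right i)
  have key := sum_map_tmul_tmul_eq (R := k)
    (LinearMap.id (R := k) (M := H)) (LinearMap.id (R := k) (M := H))
    (LinearMap.mulRight k y) x (repr := r) (a₁ := a₁) (a₂ := a₂)
  rw [LinearMap.comp_apply, LinearMap.comp_apply, hopfMap_tmul x y r, rho_tmul x y r]
  calc rho k H (∑ i ∈ r.index, r.left i ⊗ₜ[k] (r.right i * y))
      = ∑ i ∈ r.index, ∑ j ∈ (a₁ i).index,
          (a₁ i).left j ⊗ₜ[k] ((a₁ i).right j ⊗ₜ[k] (r.right i * y)) := by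
        rw [map_sum]
        exact Finset.sum_congr rfl fun i _ => rho_tmul _ _ (a₁ i)
    _ = ∑ i ∈ r.index, ∑ j ∈ (a₂ i).index,
          r.left i ⊗ₜ[k] ((a₂ i).left j ⊗ₜ[k] ((a₂ i).right j * y)) := by
        simpa using key.symm
    _ = ∑ i ∈ r.index,
          LinearMap.lTensor H (hopfMap k H) (r.left i ⊗ₜ[k] (r.right i ⊗ₜ[k] y)) := by
        refine Finset.sum_congr rfl fun i _ => ?_
        rw [LinearMap.lTensor_tmul, hopfMap_tmul _ _ (a₂ i), tmul_sum]
    _ = LinearMap.lTensor H (hopfMap k H) (∑ i ∈ r.index, r.left i ⊗ₜ[k] (r.right i ⊗ₜ[k] y)) :=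
        (map_sum _ _ _).symm

lemma epsId_comp_lTensor_mulRight (c : H) :
    epsId k H ∘ₗ LinearMap.lTensor H (LinearMap.mulRight k c) =
      LinearMap.mulRight k c ∘ₗ epsId k H := by
  apply TensorProduct.ext'
  intro a b
  simp [epsId_tmul, smul_mul_assoc]

lemma mul_comp_lTensor_epsId_comp_rho :
    LinearMap.mul' k H ∘ₗ LinearMap.lTensor H (epsId k H) ∘ₗ rho k H =
      LinearMap.mul' k H := by
  apply TensorProduct.ext'
  intro a b
  have r := ℛ k a
  rw [LinearMap.comp_apply, LinearMap.comp_apply, rho_tmul a b r, map_sum, map_sum,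
    LinearMap.mul'_apply]
  calc ∑ i ∈ r.index,
        LinearMap.mul' k H (LinearMap.lTensor H (epsId k H) (r.left i ⊗ₜ[k] (r.right i ⊗ₜ[k] b)))
      = (∑ i ∈ r.index, counit (R := k) (r.right i) • r.left i) * b := by
        rw [Finset.sum_mul]
        refine Finset.sum_congr rfl fun i _ => ?_
        rw [LinearMap.lTensor_tmul, epsId_tmul, LinearMap.mul'_apply, mul_smul_comm,
          smul_mul_assoc]
    _ = a * b := by rw [repr_sum_smul_left]

lemma invMap_tmul (S : H →ₗ[k] H) (x y : H) (r : Repr k x (H × H)) :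
    (LinearMap.lTensor H (LinearMap.mul' k H ∘ₗ S.rTensor H) ∘ₗ
      (TensorProduct.assoc k H H H).toLinearMap ∘ₗ
        LinearMap.rTensor H (Coalgebra.comul : H →ₗ[k] H ⊗[k] H)) (x ⊗ₜ[k] y) =
      ∑ i ∈ r.index, r.left i ⊗ₜ[k] (S (r.right i) * y) := by
  simp [← r.eq, sum_tmul, map_sum]

lemma bijective_of_isAntipode {S : H →ₗ[k] H} (hS : IsAntipode k H S) :
    Function.Bijective (hopfMap k H) := by
  set δ : H ⊗[k] H →ₗ[k] H ⊗[k] H :=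
    LinearMap.lTensor H (LinearMap.mul' k H ∘ₗ S.rTensor H) ∘ₗ
      (TensorProduct.assoc k H H H).toLinearMap ∘ₗ
        LinearMap.rTensor H (Coalgebra.comul : H →ₗ[k] H ⊗[k] H) with hδ
  have h1 : ∀ u, hopfMap k H (δ u) = u := by
    intro u
    induction u using TensorProduct.induction_on with
    | zero => simp
    | add u v hu hv => simp [map_add, hu, hv]
    | tmul x y =>
      set r := ℛ k x with hr
      set a₁ : (i : r.ι) → Repr k (r.left i) (H × H) := fun i => ℛ k (r.left i) with ha₁
      set a₂ : (i : r.ι) → Repr k (r.right i) (H × H) := fun i => ℛ k (r.right i) with ha₂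
      have key := sum_tmul_tmul_eq r a₁ a₂
      apply_fun LinearMap.lTensor H
        (LinearMap.mulRight k y ∘ₗ LinearMap.mul' k H ∘ₗ S.lTensor H) at key
      simp only [map_sum, LinearMap.lTensor_tmul, LinearMap.comp_apply,
        LinearMap.mul'_apply, LinearMap.mulRight_apply] at key
      have hA : ∀ i ∈ r.index,
          ∑ j ∈ (a₂ i).index, (a₂ i).left j * S ((a₂ i).right j) =
            algebraMap k H (counit (R := k) (r.right i)) := by
        intro i _
        simpa [← (a₂ i).eq, map_sum] using congr($(hS.2) (r.right i))
      rw [hδ, invMap_tmul S x y r, map_sum]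
      calc ∑ i ∈ r.index, hopfMap k H (r.left i ⊗ₜ[k] (S (r.right i) * y))
          = ∑ i ∈ r.index, ∑ j ∈ (a₁ i).index,
              (a₁ i).left j ⊗ₜ[k] ((a₁ i).right j * S (r.right i) * y) := by
            refine Finset.sum_congr rfl fun i _ => ?_
            rw [hopfMap_tmul _ _ (a₁ i)]
            exact Finset.sum_congr rfl fun j _ => by rw [mul_assoc]
        _ = ∑ i ∈ r.index, ∑ j ∈ (a₂ i).index,
              r.left i ⊗ₜ[k] ((a₂ i).left j * S ((a₂ i).right j) * y) := key
        _ = ∑ i ∈ r.index,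
              r.left i ⊗ₜ[k] (algebraMap k H (counit (R := k) (r.right i)) * y) := by
            refine Finset.sum_congr rfl fun i hi => ?_
            rw [← tmul_sum, ← Finset.sum_mul, hA i hi]
        _ = ∑ i ∈ r.index, (counit (R := k) (r.right i) • r.left i) ⊗ₜ[k] y := by
            refine Finset.sum_congr rfl fun i _ => ?_
            rw [← Algebra.smul_def, tmul_smul, smul_tmul']
        _ = x ⊗ₜ[k] y := by rw [← sum_tmul, repr_sum_smul_left]
  have h2 : ∀ u, δ (hopfMap k H u) = u := by
    intro u
    induction u using TensorProduct.induction_on with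
    | zero => simp
    | add u v hu hv => simp [map_add, hu, hv]
    | tmul x y =>
      set r := ℛ k x with hr
      set a₁ : (i : r.ι) → Repr k (r.left i) (H × H) := fun i => ℛ k (r.left i) with ha₁
      set a₂ : (i : r.ι) → Repr k (r.right i) (H × H) := fun i => ℛ k (r.right i) with ha₂
      have key := sum_tmul_tmul_eq r a₁ a₂
      apply_fun LinearMap.lTensor H
        (LinearMap.mulRight k y ∘ₗ LinearMap.mul' k H ∘ₗ S.rTensor H) at key
      simp only [map_sum, LinearMap.lTensor_tmul, LinearMap.comp_apply,
        LinearMap.mul'_apply, LinearMap.rTensor_tmul, LinearMap.mulRight_apply] at key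
      have hA : ∀ i ∈ r.index,
          ∑ j ∈ (a₂ i).index, S ((a₂ i).left j) * (a₂ i).right j =
            algebraMap k H (counit (R := k) (r.right i)) := by
        intro i _
        simpa [← (a₂ i).eq, map_sum] using congr($(hS.1) (r.right i))
      rw [hopfMap_tmul x y r, map_sum]
      calc ∑ i ∈ r.index, δ (r.left i ⊗ₜ[k] (r.right i * y))
          = ∑ i ∈ r.index, ∑ j ∈ (a₁ i).index,
              (a₁ i).left j ⊗ₜ[k] (S ((a₁ i).right j) * r.right i * y) := by
            refine Finset.sum_congr rfl fun i _ => ?_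
            rw [hδ, invMap_tmul S _ _ (a₁ i)]
            exact Finset.sum_congr rfl fun j _ => by rw [mul_assoc]
        _ = ∑ i ∈ r.index, ∑ j ∈ (a₂ i).index,
              r.left i ⊗ₜ[k] (S ((a₂ i).left j) * (a₂ i).right j * y) := key
        _ = ∑ i ∈ r.index,
              r.left i ⊗ₜ[k] (algebraMap k H (counit (R := k) (r.right i)) * y) := by
            refine Finset.sum_congr rfl fun i hi => ?_
            rw [← tmul_sum, ← Finset.sum_mul, hA i hi]
        _ = ∑ i ∈ r.index, (counit (R := k) (r.right i) • r.left i) ⊗ₜ[k] y := by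
            refine Finset.sum_congr rfl fun i _ => ?_
            rw [← Algebra.smul_def, tmul_smul, smul_tmul']
        _ = x ⊗ₜ[k] y := by rw [← sum_tmul, repr_sum_smul_left]
  exact Function.bijective_iff_has_inverse.mpr ⟨δ, h2, h1⟩

end Aux

/-- A bialgebra over a field admits an antipode iff the Hopf map
`β(x ⊗ y) = Δ(x)·(1 ⊗ y)` is bijective. -/
theorem exists_antipode_iff_hopfMap_bijective (k H : Type*) [Field k] [Ring H]
    [Bialgebra k H] :
    (∃ S : H →ₗ[k] H, IsAntipode k H S) ↔ Function.Bijective (hopfMap k H) := by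
  constructor
  · rintro ⟨S, hS⟩
    exact bijective_of_isAntipode hS
  · intro hb
    let e : H ⊗[k] H ≃ₗ[k] H ⊗[k] H := LinearEquiv.ofBijective _ hb
    have he : ∀ u, e u = hopfMap k H u := fun u => rfl
    have hsym : ∀ u, e.symm (hopfMap k H u) = u := fun u => by
      rw [← he]; exact e.symm_apply_apply u
    have hsym' : ∀ u, hopfMap k H (e.symm u) = u := fun u => by
      rw [← he]; exact e.apply_symm_apply u
    have hmul_symm : ∀ (c : H) (u : H ⊗[k] H),
        e.symm (LinearMap.lTensor H (LinearMap.mulRight k c) u) =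
          LinearMap.lTensor H (LinearMap.mulRight k c) (e.symm u) := by
      intro c u
      apply hb.injective
      rw [hsym']
      have := congr($(hopfMap_comp_lTensor_mulRight (k := k) (H := H) c) (e.symm u))
      simp only [LinearMap.comp_apply] at this
      rw [this, hsym']
    have hm_symm : ∀ u, LinearMap.mul' k H (e.symm u) = epsId k H u := by
      intro u
      have := congr($(epsId_comp_hopfMap (k := k) (H := H)) (e.symm u))
      simp only [LinearMap.comp_apply] at this
      rw [← this, hsym']
    set S : H →ₗ[k] H :=
      epsId k H ∘ₗ e.symm.toLinearMap ∘ₗ (TensorProduct.mk k H H).flip 1 with hSdef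
    have hSapp : ∀ a : H, S a = epsId k H (e.symm (a ⊗ₜ[k] 1)) := fun a => rfl
    refine ⟨S, ?_, ?_⟩
    · -- left antipode axiom
      apply LinearMap.ext
      intro x
      set r := ℛ k x with hr
      have h2 : hopfMap k H (x ⊗ₜ[k] (1 : H)) =
          ∑ i ∈ r.index, r.left i ⊗ₜ[k] r.right i := by
        rw [hopfMap_tmul x 1 r]
        exact Finset.sum_congr rfl fun i _ => by rw [mul_one]
      have h1 : ∑ i ∈ r.index, e.symm (r.left i ⊗ₜ[k] r.right i) = x ⊗ₜ[k] (1 : H) := by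
        rw [← map_sum, ← h2, hsym]
      have h3 : ∀ i, e.symm (r.left i ⊗ₜ[k] r.right i) =
          LinearMap.lTensor H (LinearMap.mulRight k (r.right i))
            (e.symm (r.left i ⊗ₜ[k] 1)) := by
        intro i
        rw [← hmul_symm, LinearMap.lTensor_tmul, LinearMap.mulRight_apply, one_mul]
      have h4 := congr(epsId k H $(h1))
      rw [map_sum, epsId_tmul] at h4
      have h5 : ∀ i, epsId k H (e.symm (r.left i ⊗ₜ[k] r.right i)) =
          S (r.left i) * r.right i := by
        intro i
        rw [h3 i, hSapp]
        have := congr($(epsId_comp_lTensor_mulRight (k := k) (H := H) (r.right i))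
          (e.symm (r.left i ⊗ₜ[k] 1)))
        simp only [LinearMap.comp_apply, LinearMap.mulRight_apply] at this
        rw [this]
      simp only [h5] at h4
      simp only [LinearMap.comp_apply, Algebra.linearMap_apply]
      rw [← r.eq, map_sum, map_sum]
      simp only [LinearMap.rTensor_tmul, LinearMap.mul'_apply]
      rw [h4, Algebra.algebraMap_eq_smul_one]
    · -- right antipode axiom
      apply LinearMap.ext
      intro x
      set r := ℛ k x with hr
      have hinj : Function.Injective (LinearMap.lTensor H (hopfMap k H)) := by
        have hco : LinearMap.lTensor H (hopfMap k H) =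
            (LinearEquiv.lTensor H e : H ⊗[k] (H ⊗[k] H) →ₗ[k] H ⊗[k] (H ⊗[k] H)) := by
          rw [LinearEquiv.coe_lTensor]
          rfl
        rw [hco]
        exact (LinearEquiv.lTensor H e).injective
      have h5 : rho k H (e.symm (x ⊗ₜ[k] (1 : H))) =
          ∑ i ∈ r.index, r.left i ⊗ₜ[k] e.symm (r.right i ⊗ₜ[k] (1 : H)) := by
        apply hinj
        have hc := congr($(rho_comp_hopfMap (k := k) (H := H)) (e.symm (x ⊗ₜ[k] (1 : H))))
        simp only [LinearMap.comp_apply] at hc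
        rw [hsym'] at hc
        rw [← hc, rho_tmul x 1 r, map_sum]
        exact Finset.sum_congr rfl fun i _ => by rw [LinearMap.lTensor_tmul, hsym']
      have h6 := congr($(mul_comp_lTensor_epsId_comp_rho (k := k) (H := H))
        (e.symm (x ⊗ₜ[k] (1 : H))))
      simp only [LinearMap.comp_apply] at h6
      rw [h5, map_sum, map_sum] at h6
      simp only [LinearMap.lTensor_tmul, LinearMap.mul'_apply] at h6
      rw [hm_symm, epsId_tmul] at h6
      simp only [LinearMap.comp_apply, Algebra.linearMap_apply]
      rw [← r.eq, map_sum, map_sum]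
      simp only [LinearMap.lTensor_tmul, LinearMap.mul'_apply]
      calc ∑ i ∈ r.index, r.left i * S (r.right i)
          = counit (R := k) x • (1 : H) := by
            rw [← h6]
            exact Finset.sum_congr rfl fun i _ => by rw [hSapp]
        _ = algebraMap k H (counit (R := k) x) := (Algebra.algebraMap_eq_smul_one _).symm
end

section
/- Let C be a small category. Then C is a groupoid (every morphism is invertible) if and only if for every pair of objects x, y, the map from the set of composable pairs {(g, f) : f ∈ C(x, y), g ∈ C(y, z) for some z} to pairs {(h, f) : f ∈ C(x, y), h ∈ C(x, z)}, given by (g, f) ↦ (g ∘ f, f), is a bijection for all z. -/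
open CategoryTheory

/-- A small category is a groupoid iff for all objects `x, z` the 'Hopf map'
sending a composable pair `(g : y ⟶ z, f : x ⟶ y)` to `(g ∘ f, f)` is a bijection
from pairs `(f : x ⟶ y, g : y ⟶ z)` (with `y` varying) to pairs
`(f : x ⟶ y, h : x ⟶ z)` (with `y` varying). -/
theorem groupoid_iff_hopfMap_bijective (C : Type*) [SmallCategory C] :
    (∀ (x y : C) (f : x ⟶ y), IsIso f) ↔
      ∀ x z : C, Function.Bijective
        (fun p : Σ y : C, (x ⟶ y) × (y ⟶ z) =>
          (⟨p.1, (p.2.1, p.2.1 ≫ p.2.2)⟩ : Σ y : C, (x ⟶ y) × (x ⟶ z))) := by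
  constructor
  · intro h x z
    refine Function.bijective_iff_has_inverse.mpr
      ⟨fun q => ⟨q.1, (q.2.1, inv q.2.1 ≫ q.2.2)⟩, ?_, ?_⟩
    · rintro ⟨y, f, g⟩
      have := h x y f
      simp
    · rintro ⟨y, f, k⟩
      have := h x y f
      simp
  · intro h x y f
    -- find g with f ≫ g = 𝟙 x
    have key : ∀ (a b : C) (u : a ⟶ b), ∃ v : b ⟶ a, u ≫ v = 𝟙 a := by
      intro a b u
      obtain ⟨⟨b', u', v⟩, hp⟩ := (h a a).2 ⟨b, (u, 𝟙 a)⟩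
      obtain ⟨h1, h2⟩ := Sigma.mk.inj_iff.mp hp
      subst h1
      obtain ⟨h3, h4⟩ := Prod.mk.inj (eq_of_heq h2)
      subst h3
      exact ⟨v, h4⟩
    obtain ⟨g, hg⟩ := key x y f
    obtain ⟨k, hk⟩ := key y x g
    have : k = f := by
      calc k = 𝟙 x ≫ k := by simp
        _ = (f ≫ g) ≫ k := by rw [hg]
        _ = f ≫ (g ≫ k) := by simp
        _ = f := by rw [hk]; simp
    exact ⟨g, hg, by rw [← this]; exact hk⟩
end

section
/- Let C be a small category such that for all objects x, z, the assignment sending a composable pair (g : y → z, f : x → y) to the pair (g ∘ f, f) is bijective onto the set of pairs (h : x → z, f : x → y with arbitrary codomain y). Then every morphism of C has a two-sided inverse, so C is a groupoid. -/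
open CategoryTheory

/-- If, for all objects `x, z` of a small category `C`, the assignment sending a
composable pair `(g : y ⟶ z, f : x ⟶ y)` to `(g ∘ f, f)` is bijective onto the set of
pairs `(h : x ⟶ z, f : x ⟶ y)` (with arbitrary `y`), then every morphism of `C` has a
two-sided inverse, i.e. `C` is a groupoid. -/
theorem groupoid_of_hopfMap_bijective (C : Type*) [SmallCategory C]
    (hbij : ∀ x z : C, Function.Bijective
      (fun p : Σ y : C, (x ⟶ y) × (y ⟶ z) =>
        (⟨p.1, (p.2.1, p.2.1 ≫ p.2.2)⟩ : Σ y : C, (x ⟶ y) × (x ⟶ z)))) :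
    ∀ (x y : C) (f : x ⟶ y), ∃ g : y ⟶ x, f ≫ g = 𝟙 x ∧ g ≫ f = 𝟙 y := by
  have key : ∀ (x y z : C) (f : x ⟶ y) (h : x ⟶ z), ∃ g : y ⟶ z, f ≫ g = h := by
    intro x y z f h
    obtain ⟨⟨w, a, b⟩, hp⟩ := (hbij x z).2 ⟨y, f, h⟩
    obtain ⟨h1, h2⟩ := Sigma.mk.inj_iff.mp hp
    subst h1
    obtain ⟨hf, hh⟩ := Prod.mk.inj (eq_of_heq h2)
    subst hf
    exact ⟨b, hh⟩
  intro x y f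
  obtain ⟨g, hg⟩ := key x y x f (𝟙 x)
  obtain ⟨k, hk⟩ := key y x y g (𝟙 y)
  have : f = k := by
    calc f = f ≫ g ≫ k := by rw [hk, Category.comp_id]
    _ = (f ≫ g) ≫ k := by rw [Category.assoc]
    _ = k := by rw [hg, Category.id_comp]
  exact ⟨g, hg, this ▸ hk⟩
end

section
/- Let H be a bimonoid in a braided monoidal category C and suppose the fusion morphism β = (id_H ⊗ μ) ∘ (Δ ⊗ id_H) : H ⊗ H → H ⊗ H is invertible. Define S : H → H as the composite (ε ⊗ id) ∘ β⁻¹ ∘ (id ⊗ η) (suitably bracketed with unitors). Then S is an antipode for H, so H is a Hopf monoid. -/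
open CategoryTheory MonoidalCategory

theorem fusion_aux {C : Type*} [Category C] [MonoidalCategory C]
    (X : C) (mul : X ⊗ X ⟶ X) (one : 𝟙_ C ⟶ X) (comul : X ⟶ X ⊗ X) (counit : X ⟶ 𝟙_ C)
    (mul_assoc : (mul ▷ X) ≫ mul = (α_ X X X).hom ≫ (X ◁ mul) ≫ mul)
    (one_mul : (one ▷ X) ≫ mul = (λ_ X).hom)
    (mul_one : (X ◁ one) ≫ mul = (ρ_ X).hom)
    (comul_assoc : comul ≫ (X ◁ comul) = comul ≫ (comul ▷ X) ≫ (α_ X X X).hom)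
    (counit_comul : comul ≫ (counit ▷ X) = (λ_ X).inv)
    (comul_counit : comul ≫ (X ◁ counit) = (ρ_ X).inv)
    (hβ : IsIso ((comul ▷ X) ≫ (α_ X X X).hom ≫ (X ◁ mul))) :
    comul ≫ (((ρ_ X).inv ≫ (X ◁ one) ≫
        inv ((comul ▷ X) ≫ (α_ X X X).hom ≫ (X ◁ mul)) ≫
        (counit ▷ X) ≫ (λ_ X).hom) ▷ X) ≫ mul = counit ≫ one ∧
      comul ≫ (X ◁ ((ρ_ X).inv ≫ (X ◁ one) ≫
        inv ((comul ▷ X) ≫ (α_ X X X).hom ≫ (X ◁ mul)) ≫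
        (counit ▷ X) ≫ (λ_ X).hom)) ≫ mul = counit ≫ one := by
  set β := (comul ▷ X) ≫ (α_ X X X).hom ≫ (X ◁ mul) with hβ_def
  haveI : IsIso β := hβ
  set S : X ⟶ X := (ρ_ X).inv ≫ (X ◁ one) ≫ inv β ≫ (counit ▷ X) ≫ (λ_ X).hom with hS_def
  have hco : comul ≫ (comul ▷ X) = comul ≫ (X ◁ comul) ≫ (α_ X X X).inv := by
    simp only [← Category.assoc]
    rw [Iso.eq_comp_inv]
    simp only [Category.assoc]
    exact comul_assoc.symm
  -- (E) : β ≫ (ε ▷ X) ≫ λ = μ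
  have hE : β ≫ (counit ▷ X) ≫ (λ_ X).hom = mul := by
    rw [hβ_def]
    slice_lhs 3 4 => rw [whisker_exchange]
    slice_lhs 2 3 => rw [← associator_naturality_left]
    slice_lhs 1 2 => rw [← comp_whiskerRight, counit_comul]
    monoidal
  have hEi : inv β ≫ mul = (counit ▷ X) ≫ (λ_ X).hom := by
    rw [← hE, IsIso.inv_hom_id_assoc]
  have hcounit_one : (ρ_ X).inv ≫ (X ◁ one) ≫ (counit ▷ X) ≫ (λ_ X).hom = counit ≫ one := by
    slice_lhs 2 3 => rw [whisker_exchange]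
    monoidal
  -- (F) : β is "comul-colinear"
  have hγco : β ≫ (comul ▷ X) = (comul ▷ X) ≫ (α_ X X X).hom ≫ (X ◁ β) ≫ (α_ X X X).inv := by
    rw [hβ_def]
    slice_lhs 3 4 => rw [whisker_exchange]
    slice_lhs 2 3 => rw [← associator_naturality_left]
    slice_lhs 1 2 => rw [← comp_whiskerRight, hco]
    simp only [comp_whiskerRight, Category.assoc, MonoidalCategory.whiskerLeft_comp]
    monoidal
  have hFinv : inv β ≫ (comul ▷ X) =
      (comul ▷ X) ≫ (α_ X X X).hom ≫ (X ◁ inv β) ≫ (α_ X X X).inv := by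
    have h2 : (comul ▷ X) ≫ (α_ X X X).hom ≫ (X ◁ β) = β ≫ (comul ▷ X) ≫ (α_ X X X).hom := by
      rw [reassoc_of% hγco]; simp
    calc inv β ≫ (comul ▷ X)
        = inv β ≫ (comul ▷ X) ≫ (α_ X X X).hom ≫ (X ◁ β) ≫ (X ◁ inv β) ≫ (α_ X X X).inv := by
          simp [← MonoidalCategory.whiskerLeft_comp]
      _ = inv β ≫ β ≫ (comul ▷ X) ≫ (α_ X X X).hom ≫ (X ◁ inv β) ≫ (α_ X X X).inv := by
          rw [reassoc_of% h2]
      _ = (comul ▷ X) ≫ (α_ X X X).hom ≫ (X ◁ inv β) ≫ (α_ X X X).inv := by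
          rw [IsIso.inv_hom_id_assoc]
  have hC1 : comul ≫ (X ◁ (ρ_ X).inv) ≫ (X ◁ (X ◁ one)) ≫ (X ◁ inv β) =
      (ρ_ X).inv ≫ (X ◁ one) ≫ inv β ≫ (comul ▷ X) ≫ (α_ X X X).hom := by
    slice_rhs 3 4 => rw [hFinv]
    slice_rhs 2 3 => rw [whisker_exchange]
    simp only [Category.assoc]
    monoidal
  -- right antipode
  have hright : comul ≫ (X ◁ S) ≫ mul = counit ≫ one := by
    rw [hS_def]
    simp only [MonoidalCategory.whiskerLeft_comp]
    slice_lhs 1 4 => rw [hC1]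
    slice_lhs 5 6 => rw [← associator_naturality_middle]
    slice_lhs 4 5 => rw [← comp_whiskerRight, comul_counit]
    have htri : ((ρ_ X).inv ▷ X) ≫ (α_ X (𝟙_ C) X).hom ≫ (X ◁ (λ_ X).hom) = 𝟙 (X ⊗ X) := by
      monoidal
    slice_lhs 4 6 => rw [htri]
    simp only [Category.id_comp, Category.comp_id, Category.assoc]
    rw [hEi]
    exact hcounit_one
  -- (Φ) : a ⊗ b ↦ a₁ S(a₂) b = ε(a) b
  have hΦ : (comul ▷ X) ≫ (α_ X X X).hom ≫ (X ◁ ((S ▷ X) ≫ mul)) ≫ mul =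
      (counit ▷ X) ≫ (λ_ X).hom := by
    simp only [MonoidalCategory.whiskerLeft_comp]
    have hassoc' : (X ◁ mul) ≫ mul = (α_ X X X).inv ≫ (mul ▷ X) ≫ mul := by
      rw [mul_assoc, Iso.inv_hom_id_assoc]
    slice_lhs 4 5 => rw [hassoc']
    slice_lhs 3 4 => rw [associator_inv_naturality_middle]
    simp only [Iso.hom_inv_id_assoc, Category.assoc]
    slice_lhs 2 3 => rw [← comp_whiskerRight]
    slice_lhs 1 2 => rw [← comp_whiskerRight]
    rw [show comul ≫ (X ◁ S) ≫ mul = counit ≫ one from hright]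
    simp only [comp_whiskerRight, Category.assoc]
    slice_lhs 2 3 => rw [one_mul]
  -- γ ≫ β = 𝟙
  have hγβ : ((comul ▷ X) ≫ (α_ X X X).hom ≫ (X ◁ ((S ▷ X) ≫ mul))) ≫ β = 𝟙 (X ⊗ X) := by
    conv_lhs => rw [hβ_def]
    simp only [Category.assoc]
    slice_lhs 3 4 => rw [whisker_exchange]
    slice_lhs 4 5 => rw [associator_naturality_right]
    slice_lhs 2 3 => rw [← associator_naturality_left]
    slice_lhs 1 2 => rw [← comp_whiskerRight, hco]
    simp only [comp_whiskerRight, Category.assoc]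
    have hpent : ((α_ X X X).inv ▷ X) ≫ (α_ (X ⊗ X) X X).hom ≫ (α_ X X (X ⊗ X)).hom =
        (α_ X (X ⊗ X) X).hom ≫ (X ◁ (α_ X X X).hom) := by monoidal
    slice_lhs 3 5 => rw [hpent]
    slice_lhs 2 3 => rw [associator_naturality_middle]
    have hΦw := congrArg (fun t => X ◁ t) hΦ
    simp only [MonoidalCategory.whiskerLeft_comp, Category.assoc] at hΦw
    simp only [MonoidalCategory.whiskerLeft_comp, Category.assoc]
    slice_lhs 3 7 => rw [hΦw]
    slice_lhs 2 3 => rw [← associator_naturality_middle]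
    slice_lhs 1 2 => rw [← comp_whiskerRight, comul_counit]
    monoidal
  -- β ≫ γ = 𝟙
  have hβγ : β ≫ ((comul ▷ X) ≫ (α_ X X X).hom ≫ (X ◁ ((S ▷ X) ≫ mul))) = 𝟙 (X ⊗ X) := by
    have hγ := congrArg (fun t => t ≫ inv β) hγβ
    simp only [Category.assoc, IsIso.hom_inv_id, IsIso.hom_inv_id_assoc, Category.comp_id,
      Category.id_comp] at hγ
    rw [hγ, IsIso.hom_inv_id]
  -- ρ⁻¹ ≫ (X ◁ η) ≫ β = comul
  have hiota : (ρ_ X).inv ≫ (X ◁ one) ≫ β = comul := by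
    rw [hβ_def]
    slice_lhs 2 3 => rw [whisker_exchange]
    slice_lhs 3 4 => rw [associator_naturality_right]
    slice_lhs 4 5 => rw [← MonoidalCategory.whiskerLeft_comp, mul_one]
    monoidal
  -- γ ≫ (ε ▷ X) ≫ λ = (S ▷ X) ≫ mul
  have hii : ((comul ▷ X) ≫ (α_ X X X).hom ≫ (X ◁ ((S ▷ X) ≫ mul))) ≫
      (counit ▷ X) ≫ (λ_ X).hom = (S ▷ X) ≫ mul := by
    simp only [Category.assoc]
    slice_lhs 3 4 => rw [whisker_exchange]
    slice_lhs 2 3 => rw [← associator_naturality_left]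
    slice_lhs 1 2 => rw [← comp_whiskerRight, counit_comul]
    monoidal
  -- left antipode
  have hleft : comul ≫ (S ▷ X) ≫ mul = counit ≫ one := by
    rw [← hii]
    slice_lhs 1 1 => rw [← hiota]
    simp only [Category.assoc]
    rw [reassoc_of% hβγ]
    exact hcounit_one
  exact ⟨hleft, hright⟩

/-- If the fusion morphism `β = (id ⊗ μ) ∘ (Δ ⊗ id)` of a bimonoid `A` in a braided
monoidal category is invertible, then `S = (ε ⊗ id) ∘ β⁻¹ ∘ (id ⊗ η)` is an antipode
for `A`, so `A` is a Hopf monoid. -/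
theorem antipode_of_fusion_isIso {C : Type*} [Category C] [MonoidalCategory C]
    [BraidedCategory C] (A : Bimon C)
    (hβ : IsIso (((ComonObj.comul (X := A.X) (self := Comon.comon (C := Mon C) A)).hom ▷ A.X.X) ≫ (α_ A.X.X A.X.X A.X.X).hom ≫
      (A.X.X ◁ (MonObj.mul (X := A.X.X))))) :
    let S : A.X.X ⟶ A.X.X :=
      (ρ_ A.X.X).inv ≫ (A.X.X ◁ (MonObj.one (X := A.X.X))) ≫
        inv (((ComonObj.comul (X := A.X) (self := Comon.comon (C := Mon C) A)).hom ▷ A.X.X) ≫ (α_ A.X.X A.X.X A.X.X).hom ≫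
          (A.X.X ◁ (MonObj.mul (X := A.X.X)))) ≫
        ((ComonObj.counit (X := A.X) (self := Comon.comon (C := Mon C) A)).hom ▷ A.X.X) ≫ (λ_ A.X.X).hom
    (ComonObj.comul (X := A.X) (self := Comon.comon (C := Mon C) A)).hom ≫ (S ▷ A.X.X) ≫ (MonObj.mul (X := A.X.X)) = (ComonObj.counit (X := A.X) (self := Comon.comon (C := Mon C) A)).hom ≫ (MonObj.one (X := A.X.X)) ∧
      (ComonObj.comul (X := A.X) (self := Comon.comon (C := Mon C) A)).hom ≫ (A.X.X ◁ S) ≫ (MonObj.mul (X := A.X.X)) = (ComonObj.counit (X := A.X) (self := Comon.comon (C := Mon C) A)).hom ≫ (MonObj.one (X := A.X.X)) := by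
  intro S
  exact fusion_aux A.X.X (MonObj.mul (X := A.X.X)) (MonObj.one (X := A.X.X))
    (ComonObj.comul (X := A.X) (self := Comon.comon (C := Mon C) A)).hom
    (ComonObj.counit (X := A.X) (self := Comon.comon (C := Mon C) A)).hom
    (MonObj.mul_assoc A.X.X) (MonObj.one_mul A.X.X) (MonObj.mul_one A.X.X)
    (ComonObj.comul_assoc A.X.X)
    (ComonObj.counit_comul A.X.X) (ComonObj.comul_counit A.X.X) hβ
end
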